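/- With the hypotheses of the V-split setup, assume in addition that V acts trivially on H/K, i.e. [H, V] ⊆ K. If some character in Irr(K | χ̃) is V-split, then every character in Irr(K | χ̃) is V-split. -/

import Mathlib

/-!
Lemma on V-split characters, part (ii): if `V` acts trivially on `H/K` and some
character in `Irr(K | χ̃)` is `V`-split, then every character in `Irr(K | χ̃)` is
`V`-split.
-/

open scoped Pointwise

/-- For a subgroup `M` of `L` and a function `θ : L → ℂ` (thought of as a character of a
subgroup of `L`, extended by zero), the stabilizer `M_θ` of `θ` in `M` under the
conjugation action `θ^x(k) = θ(x k x⁻¹)`. -/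
def charStab {L : Type} [Group L] (M : Subgroup L) (θ : L → ℂ) : Subgroup L where
  carrier := {m | m ∈ M ∧ ∀ x : L, θ (m * x * m⁻¹) = θ x}
  one_mem' := ⟨M.one_mem, fun x => by simp⟩
  mul_mem' := by
    rintro a b ⟨haM, ha⟩ ⟨hbM, hb⟩
    refine ⟨M.mul_mem haM hbM, fun x => ?_⟩
    have h : a * b * x * (a * b)⁻¹ = a * (b * x * b⁻¹) * a⁻¹ := by group
    rw [h, ha, hb]
  inv_mem' := by
    rintro a ⟨haM, ha⟩
    refine ⟨M.inv_mem haM, fun x => ?_⟩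
    have h := ha (a⁻¹ * x * a)
    have e : a * (a⁻¹ * x * a) * a⁻¹ = x := by group
    rw [e] at h
    have e2 : a⁻¹ * x * a⁻¹⁻¹ = a⁻¹ * x * a := by group
    rw [e2]
    exact h.symm

/-- `θ` is (the extension by zero of) an irreducible complex character of the subgroup
`K` of `L`. -/
def IsIrrCharOf {L : Type} [Group L] (K : Subgroup L) (θ : L → ℂ) : Prop :=
  (∀ x : L, x ∉ K → θ x = 0) ∧
  ∃ V : FDRep ℂ ↥K, CategoryTheory.Simple V ∧ ∀ k : ↥K, θ ↑k = V.character k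

/-- `χ` is an irreducible constituent of the restriction to `K` of the character `χt`:
the (unnormalized) inner product over `K` of `χt` with `χ` is nonzero. -/
def IsConstituent {L : Type} [Group L] (K : Subgroup L) (χt χ : L → ℂ) : Prop :=
  ∑ᶠ x ∈ (K : Set L), χt x * (starRingEnd ℂ) (χ x) ≠ 0

/-- A character `χ` of `K` is `V`-split (with respect to `H`) if `(HV)_χ = H_χ V_χ`. -/
def IsVSplit {L : Type} [Group L] (H V : Subgroup L) (χ : L → ℂ) : Prop :=
  ((charStab (H ⊔ V) χ : Subgroup L) : Set L)
    = ((charStab H χ : Subgroup L) : Set L) * ((charStab V χ : Subgroup L) : Set L)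

set_option linter.unusedVariables false
set_option linter.unusedTactic false


open Polynomial in
lemma trace_inv_eq_conj {VV : Type} [AddCommGroup VV] [Module ℂ VV] [FiniteDimensional ℂ VV]
    (A B : Module.End ℂ VV) (n : ℕ) (hn : 0 < n) (hA : A ^ n = 1) (hB : B * A = 1) :
    LinearMap.trace ℂ VV B = (starRingEnd ℂ) (LinearMap.trace ℂ VV A) := by
  classical
  set s : Finset ℂ := Polynomial.nthRootsFinset n (1 : ℂ) with hs
  have hmem : ∀ x ∈ s, x ^ n = 1 := fun x hx => (Polynomial.mem_nthRootsFinset hn 1).1 hx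
  have hne : s.Nonempty := ⟨1, Polynomial.one_mem_nthRootsFinset hn⟩
  obtain ⟨ζ, hζ⟩ : ∃ ζ : ℂ, IsPrimitiveRoot ζ n :=
    ⟨_, Complex.isPrimitiveRoot_exp n hn.ne'⟩
  have hprod : (X : ℂ[X]) ^ n - 1 = ∏ x ∈ s, (X - C x) :=
    X_pow_sub_one_eq_prod hn hζ
  have hnodal0 : Polynomial.aeval A ((X : ℂ[X]) ^ n - 1) = 0 := by
    simp [hA]
  set P : ℂ → Module.End ℂ VV := fun j => Polynomial.aeval A (Lagrange.basis s id j) with hP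
  have hsum : ∑ j ∈ s, P j = 1 := by
    rw [hP, ← map_sum, Lagrange.sum_basis Function.injective_id.injOn hne, map_one]
  -- basis factorization
  have hbasis : ∀ j : ℂ, Lagrange.basis s id j
      = C (∏ i ∈ s.erase j, (j - i)⁻¹) * ∏ i ∈ s.erase j, (X - C i) := by
    intro j
    rw [Lagrange.basis]
    simp only [Lagrange.basisDivisor, id]
    rw [Finset.prod_mul_distrib, map_prod]
  -- A * P j = j • P j
  have hAP : ∀ j ∈ s, A * P j = j • P j := by
    intro j hj
    have key : (X - C j) * Lagrange.basis s id j
        = C (∏ i ∈ s.erase j, (j - i)⁻¹) * ((X : ℂ[X]) ^ n - 1) := by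
      rw [hbasis j, hprod, mul_left_comm]
      congr 1
      exact Finset.mul_prod_erase s (fun x => X - C x) hj
    have h1 := congrArg (Polynomial.aeval A) key
    rw [map_mul, map_mul, hnodal0, mul_zero, map_sub, aeval_X, aeval_C, sub_mul] at h1
    have h2 : A * P j = algebraMap ℂ (Module.End ℂ VV) j * P j := by
      rw [← sub_eq_zero]; exact h1
    rw [h2, Algebra.smul_def]
  -- orthogonality of the idempotents
  have hPP : ∀ i ∈ s, ∀ j ∈ s, i ≠ j → P i * P j = 0 := by
    intro i hi j hj hij
    have hdvd : ((X : ℂ[X]) ^ n - 1) ∣ Lagrange.basis s id i * Lagrange.basis s id j := by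
      rw [hprod, hbasis i, hbasis j, mul_mul_mul_comm, ← Finset.mul_prod_erase s _ hj]
      apply Dvd.dvd.mul_left
      apply mul_dvd_mul
      · exact Finset.dvd_prod_of_mem _ (Finset.mem_erase.2 ⟨hij.symm, hj⟩)
      · exact dvd_rfl
    obtain ⟨q, hq⟩ := hdvd
    have := congrArg (Polynomial.aeval A) hq
    rw [map_mul, map_mul, hnodal0, zero_mul] at this
    exact this
  -- idempotency
  have hidem : ∀ j ∈ s, P j * P j = P j := by
    intro j hj
    have h1 : ∑ i ∈ s, P j * P i = P j * P j :=
      Finset.sum_eq_single j (fun i hi hne' => hPP j hj i hi (Ne.symm hne'))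
        (fun h => absurd hj h)
    rw [← h1, ← Finset.mul_sum, hsum, mul_one]
  -- traces of the idempotents are natural numbers
  have htr : ∀ j ∈ s, ∃ m : ℕ, LinearMap.trace ℂ VV (P j) = (m : ℂ) := by
    intro j hj
    have hproj : LinearMap.IsProj (LinearMap.range (P j)) (P j) := by
      constructor
      · intro x; exact LinearMap.mem_range_self _ x
      · rintro x ⟨y, rfl⟩
        have := congrArg (fun (T : Module.End ℂ VV) => T y) (hidem j hj)
        exact this
    exact ⟨_, hproj.trace⟩
  -- conj of root is inverse
  have hconj : ∀ j ∈ s, (starRingEnd ℂ) j = j⁻¹ := by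
    intro j hj
    have hjn := hmem j hj
    have hnorm : ‖j‖ = 1 := by
      have h1 : ‖j‖ ^ n = 1 := by rw [← norm_pow, hjn, norm_one]
      rcases lt_trichotomy ‖j‖ 1 with h | h | h
      · exfalso; have := pow_lt_one₀ (norm_nonneg j) h hn.ne'; rw [h1] at this; exact lt_irrefl _ this
      · exact h
      · exfalso; have := one_lt_pow₀ h hn.ne'; rw [h1] at this; exact lt_irrefl _ this
    have hnsq : Complex.normSq j = 1 := by
      rw [Complex.normSq_eq_norm_sq, hnorm, one_pow]
    have hmul : (starRingEnd ℂ) j * j = 1 := by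
      rw [mul_comm, Complex.mul_conj, hnsq]; norm_num
    exact eq_inv_of_mul_eq_one_left hmul
  -- decompose A and B
  have hj0 : ∀ j ∈ s, j ≠ 0 := fun j hj => Polynomial.ne_zero_of_mem_nthRootsFinset one_ne_zero hj
  have hBP : ∀ j ∈ s, B * P j = j⁻¹ • P j := by
    intro j hj
    have h1 : B * (A * P j) = P j := by rw [← mul_assoc, hB, one_mul]
    rw [hAP j hj] at h1
    have h2 : j • (B * P j) = P j := by rw [← mul_smul_comm, h1]
    calc B * P j = j⁻¹ • (j • (B * P j)) := by rw [smul_smul, inv_mul_cancel₀ (hj0 j hj), one_smul]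
    _ = j⁻¹ • P j := by rw [h2]
  have hAdec : A = ∑ j ∈ s, j • P j := by
    calc A = A * 1 := (mul_one A).symm
    _ = ∑ j ∈ s, A * P j := by rw [← hsum, Finset.mul_sum]
    _ = ∑ j ∈ s, j • P j := Finset.sum_congr rfl hAP
  have hBdec : B = ∑ j ∈ s, j⁻¹ • P j := by
    calc B = B * 1 := (mul_one B).symm
    _ = ∑ j ∈ s, B * P j := by rw [← hsum, Finset.mul_sum]
    _ = ∑ j ∈ s, j⁻¹ • P j := Finset.sum_congr rfl hBP
  rw [hAdec, hBdec, map_sum, map_sum, map_sum]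
  apply Finset.sum_congr rfl
  intro j hj
  obtain ⟨m, hm⟩ := htr j hj
  rw [map_smul, map_smul, smul_eq_mul, smul_eq_mul, hm, map_mul, hconj j hj, map_natCast]


lemma fdRep_char_inv {G : Type} [Group G] [Finite G] (X : FDRep ℂ G) (g : G) :
    X.character g⁻¹ = (starRingEnd ℂ) (X.character g) := by
  have : Fintype G := Fintype.ofFinite G
  refine trace_inv_eq_conj (X.ρ g) (X.ρ g⁻¹) (Fintype.card G) Fintype.card_pos ?_ ?_
  · rw [← map_pow, pow_card_eq_one, map_one]
  · rw [← map_mul, inv_mul_cancel, map_one]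

lemma exists_equivariant_ne_zero {G : Type} [Group G] [Fintype G] (V W : FDRep ℂ G)
    (h : ∑ g : G, V.character g * W.character g⁻¹ ≠ 0) :
    ∃ f : W →ₗ[ℂ] V, f ≠ 0 ∧ ∀ g : G, f ∘ₗ W.ρ g = V.ρ g ∘ₗ f := by
  classical
  have hcard : (Fintype.card G : ℂ) ≠ 0 := by exact_mod_cast Fintype.card_ne_zero
  have hinst : Invertible (Fintype.card G : ℂ) := invertibleOfNonzero hcard
  have h2 : ∑ g : G, (FDRep.of (Representation.linHom W.ρ V.ρ)).character g ≠ 0 := by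
    convert h using 1
    apply Finset.sum_congr rfl
    intro g _
    rw [FDRep.char_linHom, mul_comm]
  set X := FDRep.of (Representation.linHom W.ρ V.ρ) with hX
  have h3 := FDRep.average_char_eq_finrank_invariants X
  have h4 : Module.finrank ℂ (Representation.invariants X.ρ) ≠ 0 := by
    intro h0
    rw [h0, Nat.cast_zero] at h3
    rcases mul_eq_zero.1 h3 with h | h
    · rw [Nat.card_eq_fintype_card] at h
      exact hcard (inv_eq_zero.1 h)
    · exact h2 h
  have h5 : ∃ f : (Representation.invariants X.ρ), f ≠ 0 := by
    by_contra hc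
    push_neg at hc
    have : Subsingleton (Representation.invariants X.ρ) := by
      constructor; intro a b; rw [hc a, hc b]
    exact h4 Module.finrank_zero_of_subsingleton
  obtain ⟨⟨f, hf⟩, hne⟩ := h5
  rw [Representation.mem_invariants] at hf
  have hf' : ∀ g : G, (Representation.linHom W.ρ V.ρ) g f = f := by
    intro g
    have := hf g
    rwa [show X.ρ = Representation.linHom W.ρ V.ρ from FDRep.of_ρ' _] at this
  refine ⟨f, ?_, ?_⟩
  · intro h0
    apply hne
    apply Subtype.ext
    exact h0
  · intro g
    have hthis := hf' g
    rw [Representation.linHom_apply] at hthis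
    ext x
    have hy := LinearMap.congr_fun hthis (W.ρ g x)
    simp only [LinearMap.comp_apply] at hy
    have hinv : W.ρ g⁻¹ (W.ρ g x) = x := by
      rw [← Module.End.mul_apply, ← map_mul, inv_mul_cancel, map_one, Module.End.one_apply]
    rw [hinv] at hy
    simp only [LinearMap.comp_apply]
    exact hy.symm

lemma exists_equivariant_proj {G VV : Type} [Group G] [Fintype G] [AddCommGroup VV]
    [Module ℂ VV] (ρ : Representation ℂ G VV) (p : Submodule ℂ VV)
    (hp : ∀ g : G, ∀ x ∈ p, ρ g x ∈ p) :
    ∃ π : VV →ₗ[ℂ] VV, LinearMap.IsProj p π ∧ ∀ g, π ∘ₗ ρ g = ρ g ∘ₗ π := by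
  classical
  obtain ⟨q, hq⟩ := Submodule.exists_isCompl p
  set π0 : VV →ₗ[ℂ] VV := p.subtype ∘ₗ (p.projectionOnto q hq) with hπ0
  have hπ0mem : ∀ x, π0 x ∈ p := fun x => (p.projectionOnto q hq x).2
  have hπ0id : ∀ x ∈ p, π0 x = x := by
    intro x hx
    have := Submodule.linearProjOfIsCompl_apply_left hq ⟨x, hx⟩
    simp [hπ0, this]
  have hcard : (Fintype.card G : ℂ) ≠ 0 := by exact_mod_cast Fintype.card_ne_zero
  set π : VV →ₗ[ℂ] VV := (Fintype.card G : ℂ)⁻¹ • ∑ g : G, ρ g ∘ₗ π0 ∘ₗ ρ g⁻¹ with hπ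
  have hcomp : ∀ (a b : G) (y : VV), ρ a (ρ b y) = ρ (a * b) y := by
    intro a b y
    rw [map_mul]
    rfl
  have happ : ∀ x, π x = (Fintype.card G : ℂ)⁻¹ • ∑ g : G, ρ g (π0 (ρ g⁻¹ x)) := by
    intro x; rw [hπ]; simp [LinearMap.sum_apply]
  refine ⟨π, ⟨?_, ?_⟩, ?_⟩
  · intro x
    rw [happ]
    exact Submodule.smul_mem _ _ (Submodule.sum_mem _ (fun g _ =>
      hp g _ (hπ0mem _)))
  · intro x hx
    rw [happ]
    have : ∀ g : G, ρ g (π0 (ρ g⁻¹ x)) = x := by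
      intro g
      rw [hπ0id _ (hp g⁻¹ x hx), hcomp, mul_inv_cancel, map_one, Module.End.one_apply]
    rw [Finset.sum_congr rfl (fun g _ => this g)]
    rw [Finset.sum_const, Finset.card_univ, ← Nat.cast_smul_eq_nsmul ℂ, smul_smul,
      inv_mul_cancel₀ hcard, one_smul]
  · intro g
    ext x
    simp only [LinearMap.comp_apply]
    rw [happ, happ, map_smul]
    congr 1
    rw [map_sum]
    refine Fintype.sum_equiv (Equiv.mulLeft g⁻¹) _ _ ?_
    intro h
    simp only [Equiv.coe_mulLeft]
    rw [hcomp h⁻¹ g, hcomp g (g⁻¹ * h)]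
    rw [show g * (g⁻¹ * h) = h from by group, show (g⁻¹ * h)⁻¹ = h⁻¹ * g from by group]


open CategoryTheory in
lemma simple_invariant_eq_bot_or_top {G : Type} [Group G] [Fintype G]
    (X : FDRep ℂ G) [Simple X] (p : Submodule ℂ X)
    (hp : ∀ g : G, ∀ x ∈ p, X.ρ g x ∈ p) :
    p = ⊥ ∨ p = ⊤ := by
  classical
  by_contra hc
  push_neg at hc
  obtain ⟨hb, ht⟩ := hc
  obtain ⟨π, hproj, hcomm⟩ := exists_equivariant_proj X.ρ p hp
  let f : X ⟶ X := ⟨FGModuleCat.ofHom π, fun g => by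
    ext v
    have h1 := LinearMap.congr_fun (hcomm g) v
    simp only [LinearMap.comp_apply] at h1
    exact h1⟩
  have hfhom : f.hom.hom.hom = π := rfl
  obtain ⟨x, hxp, hx0⟩ := Submodule.exists_mem_ne_zero_of_ne_bot hb
  obtain ⟨y, hyp⟩ : ∃ y : X, y ∉ p := by
    by_contra hcy
    push_neg at hcy
    exact ht (Submodule.eq_top_iff'.2 hcy)
  have hli : LinearIndependent ℂ ![𝟙 X, f] := by
    rw [LinearIndependent.pair_iff]
    intro s t hst
    have hhom : s • (LinearMap.id : X →ₗ[ℂ] X) + t • π = 0 := by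
      have := congrArg (fun φ : X ⟶ X => φ.hom.hom.hom) hst
      exact this
    have hx : s • x + t • π x = 0 := by
      have := LinearMap.congr_fun hhom x
      simpa using this
    have hy : s • y + t • π y = 0 := by
      have := LinearMap.congr_fun hhom y
      simpa using this
    rw [hproj.map_id x hxp] at hx
    have hs : s = 0 := by
      by_contra hs0
      apply hyp
      have : s • y = -(t • π y) := by linear_combination (norm := module) hy
      have hyin : s • y ∈ p := by
        rw [this]
        exact Submodule.neg_mem _ (Submodule.smul_mem _ _ (hproj.map_mem y))
      have := Submodule.smul_mem p s⁻¹ hyin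
      rwa [smul_smul, inv_mul_cancel₀ hs0, one_smul] at this
    refine ⟨hs, ?_⟩
    rw [hs, zero_smul, zero_add] at hx
    rcases smul_eq_zero.1 hx with h | h
    · exact h
    · exact absurd (hproj.map_id x hxp ▸ h) hx0
  have h2 := hli.fintype_card_le_finrank
  rw [FDRep.finrank_hom_simple_simple X X, if_pos ⟨Iso.refl X⟩] at h2
  simp at h2

lemma mem_charStab {L : Type} [Group L] {M : Subgroup L} {θ : L → ℂ} {m : L} :
    m ∈ charStab M θ ↔ m ∈ M ∧ ∀ x : L, θ (m * x * m⁻¹) = θ x := Iff.rfl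

lemma vsplit_transfer {L : Type} [Group L] (H V K : Subgroup L)
    (hnorm : V ≤ Subgroup.normalizer (H : Set L)) (hKH : K ≤ H)
    (htriv : ∀ h ∈ H, ∀ v ∈ V, h * v * h⁻¹ * v⁻¹ ∈ K)
    (χ χ0 : L → ℂ) (hχ : IsIrrCharOf K χ)
    (x : L) (hx : x ∈ H) (hconj : ∀ y : L, χ y = χ0 (x * y * x⁻¹))
    (h0 : IsVSplit H V χ0) : IsVSplit H V χ := by
  classical
  obtain ⟨hvan, X, hXsimple, hXchar⟩ := hχ
  -- elements of K stabilize χ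
  have hKstab : ∀ k ∈ K, ∀ y : L, χ (k * y * k⁻¹) = χ y := by
    intro k hk y
    by_cases hy : y ∈ K
    · have h1 : k * y * k⁻¹ ∈ K := K.mul_mem (K.mul_mem hk hy) (K.inv_mem hk)
      have e1 : χ (k * y * k⁻¹) = X.character ((⟨k, hk⟩ : ↥K) * ⟨y, hy⟩ * (⟨k, hk⟩ : ↥K)⁻¹) := by
        rw [← hXchar ((⟨k, hk⟩ : ↥K) * ⟨y, hy⟩ * (⟨k, hk⟩ : ↥K)⁻¹)]
        rfl
      rw [e1, FDRep.char_conj, ← hXchar ⟨y, hy⟩]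
    · have h2 : k * y * k⁻¹ ∉ K := by
        intro hmem
        apply hy
        have h3 := K.mul_mem (K.mul_mem (K.inv_mem hk) hmem) hk
        have e : k⁻¹ * (k * y * k⁻¹) * k = y := by group
        rwa [e] at h3
      rw [hvan _ h2, hvan _ hy]
  have hKstabH : ∀ k ∈ K, k ∈ charStab H χ := fun k hk => ⟨hKH hk, hKstab k hk⟩
  -- χ0 in terms of χ
  have hconj' : ∀ z : L, χ0 z = χ (x⁻¹ * z * x) := by
    intro z
    rw [hconj (x⁻¹ * z * x)]
    congr 1
    group
  rw [IsVSplit]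
  apply Set.eq_of_subset_of_subset
  · -- hard direction
    intro g hg
    rw [SetLike.mem_coe, mem_charStab] at hg
    obtain ⟨hgHV, hgstab⟩ := hg
    -- x g x⁻¹ stabilizes χ0
    have hg' : x * g * x⁻¹ ∈ charStab (H ⊔ V) χ0 := by
      refine ⟨?_, ?_⟩
      · have hxHV : x ∈ H ⊔ V := Subgroup.mem_sup_left hx
        exact (H ⊔ V).mul_mem ((H ⊔ V).mul_mem hxHV hgHV) ((H ⊔ V).inv_mem hxHV)
      · intro y
        rw [hconj' (x * g * x⁻¹ * y * (x * g * x⁻¹)⁻¹), hconj' y]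
        have e : x⁻¹ * (x * g * x⁻¹ * y * (x * g * x⁻¹)⁻¹) * x
            = g * (x⁻¹ * y * x) * g⁻¹ := by group
        rw [e, hgstab (x⁻¹ * y * x)]
    have hg'set : (x * g * x⁻¹ : L) ∈
        ((charStab H χ0 : Subgroup L) : Set L) * ((charStab V χ0 : Subgroup L) : Set L) := by
      rw [← h0]
      exact hg'
    rw [Set.mem_mul] at hg'set
    obtain ⟨h0el, hh0el, v0, hv0, heq⟩ := hg'set
    rw [SetLike.mem_coe, mem_charStab] at hh0el hv0
    -- g = (x⁻¹ h0el x * k) * v0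
    have hk : x⁻¹ * v0 * x * v0⁻¹ ∈ K := by
      have := htriv x⁻¹ (H.inv_mem hx) v0 hv0.1
      rwa [inv_inv] at this
    set h1 : L := x⁻¹ * h0el * x with hh1def
    set k : L := x⁻¹ * v0 * x * v0⁻¹ with hkdef
    have hgdecomp : g = (h1 * k) * v0 := by
      have : g = x⁻¹ * (h0el * v0) * x := by rw [heq]; group
      rw [this, hh1def, hkdef]
      group
    -- h1 stabilizes χ
    have hh1 : h1 ∈ charStab H χ := by
      refine ⟨?_, ?_⟩
      · exact H.mul_mem (H.mul_mem (H.inv_mem hx) hh0el.1) hx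
      · intro y
        rw [hconj (h1 * y * h1⁻¹), hconj y]
        have e : x * (h1 * y * h1⁻¹) * x⁻¹ = h0el * (x * y * x⁻¹) * h0el⁻¹ := by
          rw [hh1def]; group
        rw [e, hh0el.2 (x * y * x⁻¹)]
    have hh1k : h1 * k ∈ charStab H χ := (charStab H χ).mul_mem hh1 (hKstabH k hk)
    -- v0 stabilizes χ
    have hv0stab : v0 ∈ charStab V χ := by
      refine ⟨hv0.1, ?_⟩
      have hmem : (h1 * k)⁻¹ * g ∈ charStab (H ⊔ V) χ := by
        apply (charStab (H ⊔ V) χ).mul_mem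
        · apply (charStab (H ⊔ V) χ).inv_mem
          exact ⟨Subgroup.mem_sup_left hh1k.1, hh1k.2⟩
        · exact ⟨hgHV, hgstab⟩
      have hveq : (h1 * k)⁻¹ * g = v0 := by rw [hgdecomp]; group
      rw [hveq] at hmem
      exact hmem.2
    rw [Set.mem_mul]
    exact ⟨h1 * k, hh1k, v0, hv0stab, hgdecomp.symm⟩
  · -- easy direction
    intro g hg
    rw [Set.mem_mul] at hg
    obtain ⟨a, ha, b, hb, rfl⟩ := hg
    rw [SetLike.mem_coe] at ha hb ⊢
    apply (charStab (H ⊔ V) χ).mul_mem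
    · exact ⟨Subgroup.mem_sup_left ha.1, ha.2⟩
    · exact ⟨Subgroup.mem_sup_right hb.1, hb.2⟩

/-- Clifford's theorem: two irreducible constituents of the restriction of an irreducible
character are conjugate. -/
lemma clifford_conj (L : Type) [Group L] [Finite L] (H K : Subgroup L) (hKH : K ≤ H)
    (hnorm : ∀ g ∈ H, ∀ k ∈ K, g * k * g⁻¹ ∈ K)
    (χt χ χ0 : L → ℂ) (hχt : IsIrrCharOf H χt) (hχ : IsIrrCharOf K χ)
    (hχ0 : IsIrrCharOf K χ0)
    (hc : IsConstituent K χt χ) (hc0 : IsConstituent K χt χ0) :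
    ∃ x ∈ H, ∀ y : L, χ y = χ0 (x * y * x⁻¹) := by
  classical
  haveI : Fintype ↥K := Fintype.ofFinite _
  haveI : Fintype ↥(K : Set L) := Fintype.ofFinite _
  haveI : Fintype ↥H := Fintype.ofFinite _
  obtain ⟨hvanχt, W, hWsimple, hWchar⟩ := hχt
  obtain ⟨hvanχ, Xχ, hXχsimple, hXχchar⟩ := hχ
  obtain ⟨hvanχ0, Xχ0, hXχ0simple, hXχ0char⟩ := hχ0
  haveI := hWsimple; haveI := hXχsimple; haveI := hXχ0simple
  set ι : ↥K →* ↥H := Subgroup.inclusion hKH with hι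
  set ρK : Representation ℂ ↥K W := W.ρ.comp ι with hρK
  set ResW : FDRep ℂ ↥K := FDRep.of ρK with hResW
  have hResChar : ∀ k : ↥K, ResW.character k = χt ↑k := by
    intro k
    have h1 : ResW.character k = W.character (ι k) := rfl
    rw [h1, ← hWchar (ι k)]
    rfl
  -- convert the constituent hypotheses into sums over the subtype
  have hsum : ∀ ψ : L → ℂ, (∑ᶠ x ∈ (K : Set L), ψ x) = ∑ k : ↥K, ψ ↑k := by
    intro ψ
    rw [finsum_mem_eq_toFinset_sum]
    exact Finset.sum_subtype _ (fun x => by simp) ψ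
  -- nonzero equivariant maps from Xχ and Xχ0 to ResW
  have hmap : ∀ (X : FDRep ℂ ↥K) (ψ : L → ℂ), (∀ k : ↥K, ψ ↑k = X.character k) →
      IsConstituent K χt ψ →
      ∃ f : X →ₗ[ℂ] W, f ≠ 0 ∧ ∀ k : ↥K, f ∘ₗ X.ρ k = ρK k ∘ₗ f := by
    intro X ψ hchar hcons
    obtain ⟨f, hf0, hf⟩ := exists_equivariant_ne_zero ResW X (by
      rw [IsConstituent, hsum (fun x => χt x * (starRingEnd ℂ) (ψ x))] at hcons
      convert hcons using 2 with k
      rw [hResChar k, fdRep_char_inv, hchar k])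
    exact ⟨f, hf0, hf⟩
  obtain ⟨fχ, hfχ0, hfχ⟩ := hmap Xχ χ hXχchar hc
  obtain ⟨f0, hf00, hf0⟩ := hmap Xχ0 χ0 hXχ0char hc0
  -- conjugation automorphisms of K by elements of H
  have hconjmem : ∀ (s : ↥H) (k : ↥K), (↑s : L) * ↑k * (↑s : L)⁻¹ ∈ K :=
    fun s k => hnorm ↑s s.2 ↑k k.2
  set θ : ↥H → ↥K →* ↥K := fun s =>
    { toFun := fun k => ⟨(↑s : L) * ↑k * (↑s : L)⁻¹, hconjmem s k⟩
      map_one' := by ext; simp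
      map_mul' := by intro a b; ext; simp only [Subgroup.coe_mul]; group } with hθ
  have hθcoe : ∀ (s : ↥H) (k : ↥K), ((θ s k : ↥K) : L) = ↑s * ↑k * (↑s : L)⁻¹ :=
    fun s k => rfl
  -- composition helper for W
  have hWcomp : ∀ (a b : ↥H) (y : W), W.ρ a (W.ρ b y) = W.ρ (a * b) y := by
    intro a b y
    rw [map_mul]
    rfl
  have hρKdef : ∀ (k : ↥K), ρK k = W.ρ (ι k) := fun k => rfl
  -- the equivariance condition for conjugated representations
  set Econd : ↥H → (Xχ0 →ₗ[ℂ] W) → Prop := fun s f =>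
    ∀ k : ↥K, f ∘ₗ Xχ0.ρ (θ s k) = ρK k ∘ₗ f with hEcond
  set S : Submodule ℂ W :=
    ⨆ (s : ↥H), ⨆ (f : {f : Xχ0 →ₗ[ℂ] W // Econd s f}), LinearMap.range f.val with hS
  -- S is H-invariant
  have hSinv : ∀ h : ↥H, ∀ x ∈ S, W.ρ h x ∈ S := by
    intro h x hx
    have hmapS : Submodule.map (W.ρ h) S ≤ S := by
      rw [hS, Submodule.map_iSup]
      apply iSup_le
      intro s
      rw [Submodule.map_iSup]
      apply iSup_le
      intro f
      rw [← LinearMap.range_comp]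
      have hE : Econd (s * h⁻¹) (W.ρ h ∘ₗ f.val) := by
        intro k
        have hk' : (↑h : L)⁻¹ * ↑k * (↑h : L) ∈ K := by
          have := hnorm (↑h)⁻¹ (H.inv_mem h.2) ↑k k.2
          rwa [inv_inv] at this
        set k' : ↥K := ⟨(↑h : L)⁻¹ * ↑k * (↑h : L), hk'⟩ with hk'def
        have hidx : θ (s * h⁻¹) k = θ s k' := by
          ext
          show ((↑s * (↑h)⁻¹) : L) * ↑k * ((↑s * (↑h)⁻¹) : L)⁻¹ = ↑s * ((↑h)⁻¹ * ↑k * ↑h) * (↑s : L)⁻¹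
          group
        ext x0
        simp only [LinearMap.comp_apply]
        rw [hidx]
        have h1 := LinearMap.congr_fun (f.2 k') x0
        simp only [LinearMap.comp_apply] at h1
        rw [h1, hρKdef k', hWcomp h (ι k'), hρKdef k]
        have hmul : h * ι k' = ι k * h := by
          ext
          show (↑h : L) * ((↑h)⁻¹ * ↑k * ↑h) = ↑k * ↑h
          group
        rw [hmul, ← hWcomp (ι k) h]
      calc LinearMap.range (W.ρ h ∘ₗ f.val)
          ≤ ⨆ (f' : {f' : Xχ0 →ₗ[ℂ] W // Econd (s * h⁻¹) f'}), LinearMap.range f'.val :=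
            le_iSup (fun f' : {f' : Xχ0 →ₗ[ℂ] W // Econd (s * h⁻¹) f'} =>
              LinearMap.range f'.val) ⟨W.ρ h ∘ₗ f.val, hE⟩
        _ ≤ S := le_iSup_of_le (s * h⁻¹) le_rfl
    exact hmapS ⟨x, hx, rfl⟩
  -- S is nonzero since f0 lands in it
  have hf0E : Econd 1 f0 := by
    intro k
    have : θ 1 k = k := by ext; show (1 : L) * ↑k * (1 : L)⁻¹ = ↑k; group
    rw [this]
    exact hf0 k
  have hrange0 : LinearMap.range f0 ≤ S := by
    calc LinearMap.range f0 
        ≤ ⨆ (f' : {f' : Xχ0 →ₗ[ℂ] W // Econd 1 f'}), LinearMap.range f'.val :=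
          le_iSup (fun f' : {f' : Xχ0 →ₗ[ℂ] W // Econd 1 f'} =>
            LinearMap.range f'.val) ⟨f0, hf0E⟩
      _ ≤ S := le_iSup_of_le 1 le_rfl
  have hSne : S ≠ ⊥ := by
    intro hbot
    apply hf00
    ext y
    have : f0 y ∈ (⊥ : Submodule ℂ W) := hbot ▸ hrange0 (LinearMap.mem_range_self f0 y)
    simpa using this
  -- by simplicity of W, S = ⊤
  have hStop : S = ⊤ := by
    rcases simple_invariant_eq_bot_or_top W S hSinv with h | h
    · exact absurd h hSne
    · exact h
  -- fχ is injective
  have hρKcomp : ∀ (a b : ↥K) (y : W), ρK a (ρK b y) = ρK (a * b) y := by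
    intro a b y
    rw [map_mul]
    rfl
  have hXχcomp : ∀ (a b : ↥K) (y : Xχ), Xχ.ρ a (Xχ.ρ b y) = Xχ.ρ (a * b) y := by
    intro a b y
    rw [map_mul]
    rfl
  have hXχ0comp : ∀ (a b : ↥K) (y : Xχ0), Xχ0.ρ a (Xχ0.ρ b y) = Xχ0.ρ (a * b) y := by
    intro a b y
    rw [map_mul]
    rfl
  have hfχpt : ∀ (k : ↥K) (y : Xχ), fχ (Xχ.ρ k y) = ρK k (fχ y) := by
    intro k y
    have := LinearMap.congr_fun (hfχ k) y
    simpa using this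
  have hfχinj : Function.Injective fχ := by
    have hker : ∀ k : ↥K, ∀ y ∈ LinearMap.ker fχ, Xχ.ρ k y ∈ LinearMap.ker fχ := by
      intro k y hy
      rw [LinearMap.mem_ker] at hy ⊢
      rw [hfχpt k y, hy, map_zero]
    rcases simple_invariant_eq_bot_or_top Xχ (LinearMap.ker fχ) hker with h | h
    · exact LinearMap.ker_eq_bot.1 h
    · exfalso
      apply hfχ0
      ext y
      have : y ∈ LinearMap.ker fχ := h ▸ Submodule.mem_top
      simpa using this
  -- U = range fχ, K-invariant
  set U : Submodule ℂ W := LinearMap.range fχ with hU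
  have hUinv : ∀ k : ↥K, ∀ x ∈ U, ρK k x ∈ U := by
    rintro k x ⟨y, rfl⟩
    exact ⟨Xχ.ρ k y, hfχpt k y⟩
  obtain ⟨π, hπproj, hπcomm⟩ := exists_equivariant_proj ρK U hUinv
  have hπpt : ∀ (k : ↥K) (x : W), π (ρK k x) = ρK k (π x) := by
    intro k x
    have := LinearMap.congr_fun (hπcomm k) x
    simpa using this
  -- pick a piece of S on which π is nonzero
  have hπne : π ≠ 0 := by
    intro h0
    obtain ⟨y, hy⟩ : ∃ y : Xχ, fχ y ≠ 0 := by
      by_contra hcon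
      push_neg at hcon
      exact hfχ0 (by ext y; simpa using hcon y)
    have := hπproj.map_id (fχ y) ⟨y, rfl⟩
    rw [h0] at this
    exact hy (by simpa using this.symm)
  obtain ⟨s, f, hπf⟩ : ∃ (s : ↥H) (f : {f : Xχ0 →ₗ[ℂ] W // Econd s f}),
      π ∘ₗ f.val ≠ 0 := by
    by_contra hcon
    push_neg at hcon
    apply hπne
    have hSker : S ≤ LinearMap.ker π := by
      rw [hS]
      apply iSup_le
      intro s
      apply iSup_le
      intro f
      rintro x ⟨y, rfl⟩
      rw [LinearMap.mem_ker]
      exact LinearMap.congr_fun (hcon s f) y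
    rw [hStop] at hSker
    ext x
    simpa using hSker (Submodule.mem_top : x ∈ ⊤)
  -- φ' = π ∘ f : equivariant, lands in U
  set φ' : Xχ0 →ₗ[ℂ] W := π ∘ₗ f.val with hφ'
  have hφ'E : ∀ (k : ↥K) (x : Xχ0), φ' (Xχ0.ρ (θ s k) x) = ρK k (φ' x) := by
    intro k x
    have h1 := LinearMap.congr_fun (f.2 k) x
    simp only [LinearMap.comp_apply] at h1
    simp only [hφ', LinearMap.comp_apply]
    rw [h1, hπpt]
  have hφ'U : ∀ x, φ' x ∈ U := fun x => hπproj.map_mem _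
  -- build ψ : Xχ0 → Xχ
  set eU : Xχ ≃ₗ[ℂ] U := LinearEquiv.ofInjective fχ hfχinj with heU
  have heUval : ∀ y : Xχ, (eU y : W) = fχ y := fun y => rfl
  set ψ : Xχ0 →ₗ[ℂ] Xχ := eU.symm.toLinearMap ∘ₗ (φ'.codRestrict U hφ'U) with hψ
  have hψval : ∀ x : Xχ0, fχ (ψ x) = φ' x := by
    intro x
    have h1 : eU (ψ x) = φ'.codRestrict U hφ'U x := by
      simp [hψ]
    have h2 := congrArg (fun u : U => (u : W)) h1
    simp at h2
    exact h2
  have hψE : ∀ (k : ↥K) (x : Xχ0), ψ (Xχ0.ρ (θ s k) x) = Xχ.ρ k (ψ x) := by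
    intro k x
    apply hfχinj
    rw [hψval, hfχpt, hψval, hφ'E]
  have hψ0 : ψ ≠ 0 := by
    intro h0
    apply hπf
    ext x
    have h1 := hψval x
    rw [h0] at h1
    simp only [LinearMap.zero_apply, map_zero] at h1
    simpa [hφ', LinearMap.comp_apply] using h1.symm
  -- θ s is surjective
  have hθsurj : ∀ k : ↥K, ∃ k' : ↥K, θ s k' = k := by
    intro k
    have hkmem : (↑s : L)⁻¹ * ↑k * (↑s : L) ∈ K := by
      have := hnorm (↑s)⁻¹ (H.inv_mem s.2) ↑k k.2
      rwa [inv_inv] at this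
    refine ⟨⟨(↑s : L)⁻¹ * ↑k * ↑s, hkmem⟩, ?_⟩
    ext
    show (↑s : L) * ((↑s)⁻¹ * ↑k * ↑s) * (↑s : L)⁻¹ = ↑k
    group
  -- ψ injective
  have hψinj : Function.Injective ψ := by
    have hker : ∀ k : ↥K, ∀ y ∈ LinearMap.ker ψ, Xχ0.ρ k y ∈ LinearMap.ker ψ := by
      intro k y hy
      rw [LinearMap.mem_ker] at hy ⊢
      obtain ⟨k', hk'⟩ := hθsurj k
      rw [← hk', hψE, hy, map_zero]
    rcases simple_invariant_eq_bot_or_top Xχ0 (LinearMap.ker ψ) hker with h | h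
    · exact LinearMap.ker_eq_bot.1 h
    · exfalso
      apply hψ0
      ext y
      have : y ∈ LinearMap.ker ψ := h ▸ Submodule.mem_top
      simpa using this
  -- ψ surjective
  have hψsurj : Function.Surjective ψ := by
    have hrng : ∀ k : ↥K, ∀ y ∈ LinearMap.range ψ, Xχ.ρ k y ∈ LinearMap.range ψ := by
      rintro k y ⟨x, rfl⟩
      exact ⟨Xχ0.ρ (θ s k) x, hψE k x⟩
    rcases simple_invariant_eq_bot_or_top Xχ (LinearMap.range ψ) hrng with h | h
    · exfalso
      apply hψ0
      ext y
      have : ψ y ∈ (⊥ : Submodule ℂ Xχ) := h ▸ LinearMap.mem_range_self ψ y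
      simpa using this
    · exact LinearMap.range_eq_top.1 h
  -- transport characters along ψ
  set e : Xχ0 ≃ₗ[ℂ] Xχ := LinearEquiv.ofBijective ψ ⟨hψinj, hψsurj⟩ with he
  have hchar : ∀ k : ↥K, Xχ.character k = Xχ0.character (θ s k) := by
    intro k
    have hconj : Xχ.ρ k = e.conj (Xχ0.ρ (θ s k)) := by
      ext x
      rw [LinearEquiv.conj_apply]
      simp only [LinearMap.comp_apply, LinearEquiv.coe_coe]
      have h1 : (e (Xχ0.ρ (θ s k) (e.symm x))) = ψ (Xχ0.ρ (θ s k) (e.symm x)) := rfl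
      rw [h1, hψE k (e.symm x)]
      congr 1
      show x = ψ (e.symm x)
      exact (e.apply_symm_apply x).symm
    show LinearMap.trace ℂ _ (Xχ.ρ k) = LinearMap.trace ℂ _ (Xχ0.ρ (θ s k))
    rw [hconj, LinearMap.trace_conj']
  -- conclude
  refine ⟨↑s, s.2, ?_⟩
  intro y
  by_cases hy : y ∈ K
  · have h1 : χ y = Xχ.character ⟨y, hy⟩ := hXχchar ⟨y, hy⟩
    have h2 : χ0 (↑s * y * (↑s : L)⁻¹) = Xχ0.character (θ s ⟨y, hy⟩) :=
      hXχ0char (θ s ⟨y, hy⟩)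
    rw [h1, h2, hchar]
  · have h1 : χ y = 0 := hvanχ y hy
    have h2 : ↑s * y * (↑s : L)⁻¹ ∉ K := by
      intro hmem
      apply hy
      have := hnorm (↑s)⁻¹ (H.inv_mem s.2) _ hmem
      rw [inv_inv] at this
      have heq : (↑s : L)⁻¹ * (↑s * y * (↑s : L)⁻¹) * ↑s = y := by group
      rwa [heq] at this
    rw [h1, hvanχ0 _ h2]

/-- Let `L` be a finite group, `H, V, K ≤ L` with `V` normalizing `H`, `K ≤ H` normal in
`HV = H ⊔ V`, and every element of `H ∩ V` acting on `K` by an inner automorphism of `K`.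
Assume moreover that `V` acts trivially on `H/K`, i.e. `[H, V] ⊆ K`.
Let `χ̃` be an irreducible character of `H`.  If some character in `Irr(K | χ̃)` is
`V`-split, then every character in `Irr(K | χ̃)` is `V`-split. -/
theorem vSplit_of_exists_vSplit
    (L : Type) [Group L] [Finite L] (H V K : Subgroup L)
    (hnorm : V ≤ Subgroup.normalizer (H : Set L))
    (hKH : K ≤ H)
    (hKnormal : ∀ g ∈ H ⊔ V, ∀ k ∈ K, g * k * g⁻¹ ∈ K)
    (hinner : ∀ x ∈ H ⊓ V, ∃ k ∈ K, ∀ y ∈ K, x * y * x⁻¹ = k * y * k⁻¹)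
    (htriv : ∀ h ∈ H, ∀ v ∈ V, h * v * h⁻¹ * v⁻¹ ∈ K)
    (χt : L → ℂ) (hχt : IsIrrCharOf H χt)
    (hex : ∃ χ : L → ℂ, IsIrrCharOf K χ ∧ IsConstituent K χt χ ∧ IsVSplit H V χ) :
    ∀ χ : L → ℂ, IsIrrCharOf K χ → IsConstituent K χt χ → IsVSplit H V χ := by
  intro χ hχ hcons
  obtain ⟨χ0, hχ0, hcons0, hsplit0⟩ := hex
  have hnormH : ∀ g ∈ H, ∀ k ∈ K, g * k * g⁻¹ ∈ K := fun g hg k hk =>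
    hKnormal g (Subgroup.mem_sup_left hg) k hk
  obtain ⟨x, hx, hconj⟩ := clifford_conj L H K hKH hnormH χt χ χ0 hχt hχ hχ0 hcons hcons0
  exact vsplit_transfer H V K hnorm hKH htriv χ χ0 hχ x hx hconj hsplit0
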